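/- The set of finite rank bounded operators on a separable Hilbert space H is an F_σ subset of B(H) in the strong operator topology. -/

import Mathlib

/-- The strong operator topology on `H →L[ℂ] H`. -/
noncomputable def sot (H : Type*) [NormedAddCommGroup H] [InnerProductSpace ℂ H] :
    TopologicalSpace (H →L[ℂ] H) :=
  TopologicalSpace.induced (fun T => (T : H → H)) Pi.topologicalSpace

open scoped ComplexInnerProductSpace in
lemma gram_det_eq_zero_iff {H : Type*} [NormedAddCommGroup H] [InnerProductSpace ℂ H]
    {m : ℕ} (v : Fin m → H) :
    (Matrix.of fun i j => (⟪v i, v j⟫ : ℂ)).det = 0 ↔ ¬ LinearIndependent ℂ v := by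
  constructor
  · intro hdet
    obtain ⟨g, hgne, hg⟩ := Matrix.exists_mulVec_eq_zero_iff.2 hdet
    have hw : (∑ j, g j • v j) = ∑ j, g j • v j := rfl
    have hvw : ∀ i, (⟪v i, ∑ j, g j • v j⟫ : ℂ) = 0 := by
      intro i
      have := congrFun hg i
      simp only [Matrix.mulVec, dotProduct, Matrix.of_apply, Pi.zero_apply] at this
      rw [inner_sum]
      simp only [inner_smul_right]
      calc ∑ j, g j * ⟪v i, v j⟫ = ∑ j, ⟪v i, v j⟫ * g j := by
            simp [mul_comm]
        _ = 0 := this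
    have hw0 : (∑ j, g j • v j) = 0 := by
      rw [← inner_self_eq_zero (𝕜 := ℂ)]
      rw [sum_inner]
      simp only [inner_smul_left]
      calc ∑ i, (starRingEnd ℂ) (g i) * ⟪v i, ∑ j, g j • v j⟫
          = ∑ i, (starRingEnd ℂ) (g i) * 0 := by
            exact Finset.sum_congr rfl fun i _ => by rw [hvw i]
        _ = 0 := by simp
    intro hli
    obtain ⟨i, hi⟩ := Function.ne_iff.1 hgne
    exact hi (Fintype.linearIndependent_iff.1 hli g hw0 i)
  · intro hli
    obtain ⟨g, hsum, i, hgi⟩ := Fintype.not_linearIndependent_iff.1 hli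
    refine Matrix.exists_mulVec_eq_zero_iff.1 ⟨g, ?_, ?_⟩
    · intro h; exact hgi (congrFun h i)
    · funext k
      simp only [Matrix.mulVec, dotProduct, Matrix.of_apply, Pi.zero_apply]
      calc ∑ j, (⟪v k, v j⟫ : ℂ) * g j = ∑ j, (⟪v k, g j • v j⟫ : ℂ) := by
            simp [inner_smul_right, mul_comm]
        _ = ⟪v k, ∑ j, g j • v j⟫ := (inner_sum _ _ _).symm
        _ = 0 := by rw [hsum, inner_zero_right]

set_option maxHeartbeats 1000000 in
open scoped ComplexInnerProductSpace in
theorem stmt_12 {H : Type*} [NormedAddCommGroup H] [InnerProductSpace ℂ H]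
    [CompleteSpace H] (e : HilbertBasis ℕ ℂ H) :
    ∃ C : ℕ → Set (H →L[ℂ] H), (∀ n, @IsClosed _ (sot H) (C n)) ∧
      {T : H →L[ℂ] H | FiniteDimensional ℂ (LinearMap.range (T : H →ₗ[ℂ] H))} = ⋃ n, C n := by
  refine ⟨fun n => {T | ∀ x : Fin (n + 1) → H,
      (Matrix.of fun i j => (⟪T (x i), T (x j)⟫ : ℂ)).det = 0}, ?_, ?_⟩
  · intro n
    letI := sot H
    show @IsClosed _ (sot H) {T : H →L[ℂ] H | ∀ x : Fin (n + 1) → H,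
      (Matrix.of fun i j => (⟪T (x i), T (x j)⟫ : ℂ)).det = 0}
    have hcoe : @Continuous _ _ (sot H) _ (fun T : H →L[ℂ] H => (T : H → H)) :=
      continuous_induced_dom
    have key : ∀ x : Fin (n + 1) → H,
        @Continuous _ _ (sot H) _ (fun T : H →L[ℂ] H =>
          (Matrix.of fun i j => (⟪T (x i), T (x j)⟫ : ℂ)).det) := by
      intro x
      letI := sot H
      have hev : ∀ y : H, Continuous fun T : H →L[ℂ] H => T y :=
        fun y => (continuous_apply y).comp hcoe
      exact Continuous.matrix_det <| continuous_matrix fun i j =>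
        Continuous.inner (hev (x i)) (hev (x j))
    have : {T : H →L[ℂ] H | ∀ x : Fin (n + 1) → H,
        (Matrix.of fun i j => (⟪T (x i), T (x j)⟫ : ℂ)).det = 0} =
        ⋂ x : Fin (n + 1) → H, (fun T : H →L[ℂ] H =>
          (Matrix.of fun i j => (⟪T (x i), T (x j)⟫ : ℂ)).det) ⁻¹' {0} := by
      ext T; simp [Set.mem_iInter]
    rw [this]
    exact isClosed_iInter fun x =>
      IsClosed.preimage (key x) isClosed_singleton
  · show _ = ⋃ n, {T : H →L[ℂ] H | ∀ x : Fin (n + 1) → H,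
      (Matrix.of fun i j => (⟪T (x i), T (x j)⟫ : ℂ)).det = 0}
    ext T
    simp only [Set.mem_setOf_eq, Set.mem_iUnion]
    constructor
    · intro hfd
      refine ⟨Module.finrank ℂ (LinearMap.range (T : H →ₗ[ℂ] H)), fun x => ?_⟩
      rw [gram_det_eq_zero_iff]
      intro hli
      have hli' : LinearIndependent ℂ fun i : Fin (Module.finrank ℂ (LinearMap.range (T : H →ₗ[ℂ] H)) + 1) =>
          (⟨T (x i), LinearMap.mem_range_self (T : H →ₗ[ℂ] H) (x i)⟩ : LinearMap.range (T : H →ₗ[ℂ] H)) := by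
        apply hli.of_comp (LinearMap.range (T : H →ₗ[ℂ] H)).subtype
      have := hli'.fintype_card_le_finrank
      rw [Fintype.card_fin] at this
      omega
    · rintro ⟨n, hn⟩
      have hrank : Module.rank ℂ (LinearMap.range (T : H →ₗ[ℂ] H)) ≤ n := by
        apply rank_le
        intro s hs
        by_contra hcard
        push_neg at hcard
        have hcard2 : Fintype.card (Fin (n + 1)) ≤ Fintype.card s := by
          rw [Fintype.card_fin, Fintype.card_coe]; omega
        obtain ⟨f⟩ := Function.Embedding.nonempty_of_card_le hcard2
        -- the subfamily is linearly independent in range T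
        have hsub : LinearIndependent ℂ fun i : Fin (n + 1) => ((f i : LinearMap.range (T : H →ₗ[ℂ] H)) : H) := by
          have h1 : LinearIndependent ℂ fun i : Fin (n + 1) => (f i : LinearMap.range (T : H →ₗ[ℂ] H)) :=
            hs.comp f f.injective
          exact h1.map' (LinearMap.range (T : H →ₗ[ℂ] H)).subtype (Submodule.ker_subtype _)
        choose x hx using fun i : Fin (n + 1) =>
          LinearMap.mem_range.mp (f i : LinearMap.range (T : H →ₗ[ℂ] H)).2
        have hdet := hn x
        rw [gram_det_eq_zero_iff] at hdet
        apply hdet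
        have heq : (fun i : Fin (n + 1) => T (x i)) =
            fun i : Fin (n + 1) => ((f i : LinearMap.range (T : H →ₗ[ℂ] H)) : H) := funext fun i => hx i
        exact heq.symm ▸ hsub
      have : Module.rank ℂ (LinearMap.range (T : H →ₗ[ℂ] H)) < Cardinal.aleph0 :=
        lt_of_le_of_lt hrank (Cardinal.nat_lt_aleph0 n)
      exact Module.rank_lt_aleph0_iff.mp this
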